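/- Let r > 0 be a non-integer real number and set a_k = [k^r] (the integer part of k^r) for k ≥ 1. Then the sequence {a_k}_{k≥1} satisfies Condition (*): for every L > 0, lim_{N→∞} (1/N²)·#{(i,j) ∈ {1,…,N}² : |a_i − a_j| ≤ L} = 0. -/

import Mathlib

open Filter Topology

open scoped Classical in
/-- `#{(i,j) ∈ [1,N]² : |a_i - a_j| ≤ L}` for an integer-valued sequence. -/
noncomputable def starCountZ (a : ℕ → ℤ) (L : ℝ) (N : ℕ) : ℕ :=
  ((Finset.Icc 1 N ×ˢ Finset.Icc 1 N).filter
    fun p : ℕ × ℕ => |(a p.1 : ℝ) - (a p.2 : ℝ)| ≤ L).card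

/-- Mean value theorem estimate: for `1 ≤ x < y ≤ N`,
`y^r - x^r ≥ r * N^(min r 1 - 1) * (y - x)`. -/
private lemma mvt_rpow (r : ℝ) (hr : 0 < r) {x y N : ℝ} (hx : 1 ≤ x) (hxy : x < y)
    (hyN : y ≤ N) :
    r * N ^ (min r 1 - 1) * (y - x) ≤ y ^ r - x ^ r := by
  have hx0 : (0:ℝ) < x := lt_of_lt_of_le one_pos hx
  have hN1 : (1:ℝ) ≤ N := le_trans (le_trans hx hxy.le) hyN
  obtain ⟨ξ, hξ, hslope⟩ := exists_hasDerivAt_eq_slope (fun t => t ^ r)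
    (fun t => r * t ^ (r - 1)) hxy
    (fun t ht => (Real.continuousAt_rpow_const t r
      (Or.inl (ne_of_gt (lt_of_lt_of_le hx0 ht.1)))).continuousWithinAt)
    (fun t ht => Real.hasDerivAt_rpow_const
      (Or.inl (ne_of_gt (lt_trans hx0 ht.1))))
  have hξ0 : (0:ℝ) < ξ := lt_trans hx0 hξ.1
  have hξ1 : (1:ℝ) ≤ ξ := le_trans hx hξ.1.le
  have hξN : ξ ≤ N := le_trans hξ.2.le hyN
  have hkey : N ^ (min r 1 - 1) ≤ ξ ^ (r - 1) := by
    rcases le_total r 1 with h1 | h1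
    · rw [min_eq_left h1]
      exact Real.rpow_le_rpow_of_nonpos hξ0 hξN (by linarith)
    · rw [min_eq_right h1]
      simpa using Real.one_le_rpow hξ1 (by linarith)
  have heq : y ^ r - x ^ r = r * ξ ^ (r - 1) * (y - x) := by
    have hyx : y - x ≠ 0 := sub_ne_zero.mpr hxy.ne'
    field_simp at hslope
    linarith [hslope]
  rw [heq]
  have : N ^ (min r 1 - 1) * (y - x) ≤ ξ ^ (r - 1) * (y - x) :=
    mul_le_mul_of_nonneg_right hkey (by linarith)
  calc r * N ^ (min r 1 - 1) * (y - x) = r * (N ^ (min r 1 - 1) * (y - x)) := by ring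
    _ ≤ r * (ξ ^ (r - 1) * (y - x)) := mul_le_mul_of_nonneg_left this hr.le
    _ = r * ξ ^ (r - 1) * (y - x) := by ring

/-- Key estimate: if the floor values are close, the indices are close. -/
private lemma key_est (r : ℝ) (hr : 0 < r) (L : ℝ) (hL : 0 < L)
    (a : ℕ → ℤ) (ha : ∀ k, a k = ⌊(k : ℝ) ^ r⌋)
    {N i j : ℕ} (hi : 1 ≤ i) (hij : i ≤ j) (hjN : j ≤ N)
    (h : |(a i : ℝ) - (a j : ℝ)| ≤ L) :
    (j : ℝ) - i ≤ (L + 2) / r * (N : ℝ) ^ (1 - min r 1) := by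
  set s : ℝ := min r 1 with hs
  have hN0 : (0:ℝ) < N := by
    have : 1 ≤ N := le_trans hi (le_trans hij hjN)
    exact_mod_cast Nat.lt_of_lt_of_le Nat.zero_lt_one this
  have hrpos : (0:ℝ) < (N : ℝ) ^ (1 - s) := Real.rpow_pos_of_pos hN0 _
  rcases eq_or_lt_of_le hij with rfl | hlt
  · have : (0:ℝ) ≤ (L + 2) / r * (N : ℝ) ^ (1 - s) := by positivity
    simpa using this
  · have hi1 : (1:ℝ) ≤ (i:ℝ) := by exact_mod_cast hi
    have hijR : (i:ℝ) < (j:ℝ) := by exact_mod_cast hlt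
    have hjNR : (j:ℝ) ≤ (N:ℝ) := by exact_mod_cast hjN
    -- floor value closeness gives rpow closeness
    have hfl : (j:ℝ) ^ r - (i:ℝ) ^ r ≤ L + 2 := by
      have h1 := Int.floor_le ((i:ℝ) ^ r)
      have h2 := Int.lt_floor_add_one ((j:ℝ) ^ r)
      have h3 : ((a i : ℝ)) - (a j : ℝ) ≥ -L := by
        have := abs_le.1 h
        linarith [this.1]
      rw [ha i, ha j] at *
      linarith
    have hmvt := mvt_rpow r hr hi1 hijR hjNR
    have hmul : (N:ℝ) ^ (1 - s) * (N:ℝ) ^ (s - 1) = 1 := by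
      rw [← Real.rpow_add hN0]
      norm_num
    have hpos2 : (0:ℝ) < (N:ℝ) ^ (s - 1) := Real.rpow_pos_of_pos hN0 _
    rw [div_mul_eq_mul_div, le_div_iff₀ hr]
    have hstep : r * (N:ℝ) ^ (s - 1) * ((j:ℝ) - i) ≤ L + 2 := le_trans hmvt hfl
    have := mul_le_mul_of_nonneg_right hstep hrpos.le
    nlinarith [this, hmul]

/-- Counting bound: the number of pairs with indices within `K` of each other. -/
private lemma count_bound (a : ℕ → ℤ) (L : ℝ) (N K : ℕ)
    (hK : ∀ i j : ℕ, i ∈ Finset.Icc 1 N → j ∈ Finset.Icc 1 N →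
      |(a i : ℝ) - (a j : ℝ)| ≤ L → j ≤ i + K ∧ i ≤ j + K) :
    starCountZ a L N ≤ N * (2 * K + 1) := by
  classical
  unfold starCountZ
  have hsub : ((Finset.Icc 1 N ×ˢ Finset.Icc 1 N).filter
      fun p : ℕ × ℕ => |(a p.1 : ℝ) - (a p.2 : ℝ)| ≤ L) ⊆
      (Finset.Icc 1 N).biUnion
        (fun i => ({i} : Finset ℕ) ×ˢ Finset.Icc (i - K) (i + K)) := by
    intro p hp
    rw [Finset.mem_filter, Finset.mem_product] at hp
    obtain ⟨⟨h1, h2⟩, h3⟩ := hp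
    obtain ⟨hb1, hb2⟩ := hK p.1 p.2 h1 h2 h3
    rw [Finset.mem_biUnion]
    refine ⟨p.1, h1, ?_⟩
    rw [Finset.mem_product, Finset.mem_singleton, Finset.mem_Icc]
    exact ⟨rfl, by omega, by omega⟩
  calc ((Finset.Icc 1 N ×ˢ Finset.Icc 1 N).filter
      fun p : ℕ × ℕ => |(a p.1 : ℝ) - (a p.2 : ℝ)| ≤ L).card
      ≤ ((Finset.Icc 1 N).biUnion
        (fun i => ({i} : Finset ℕ) ×ˢ Finset.Icc (i - K) (i + K))).card :=
        Finset.card_le_card hsub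
    _ ≤ ∑ i ∈ Finset.Icc 1 N,
        (({i} : Finset ℕ) ×ˢ Finset.Icc (i - K) (i + K)).card :=
        Finset.card_biUnion_le
    _ ≤ ∑ _i ∈ Finset.Icc 1 N, (2 * K + 1) := by
        apply Finset.sum_le_sum
        intro i _
        rw [Finset.card_product, Finset.card_singleton, one_mul, Nat.card_Icc]
        omega
    _ = N * (2 * K + 1) := by
        rw [Finset.sum_const, Nat.card_Icc, smul_eq_mul]
        norm_num

/-- For a positive non-integer real `r`, the sequence `a k = [k^r]` satisfies
Condition (*). -/
theorem rpow_floor_satisfies_condition_star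
    (r : ℝ) (hr : 0 < r) (hr' : ∀ z : ℤ, r ≠ (z : ℝ))
    (a : ℕ → ℤ) (ha : ∀ k, a k = ⌊(k : ℝ) ^ r⌋) :
    ∀ L : ℝ, 0 < L →
      Tendsto (fun N : ℕ => (starCountZ a L N : ℝ) / (N : ℝ) ^ 2) atTop (𝓝 0) := by
  intro L hL
  set s : ℝ := min r 1 with hs
  have hs0 : 0 < s := lt_min hr one_pos
  set c : ℝ := (L + 2) / r with hc
  have hc0 : 0 < c := div_pos (by linarith) hr
  -- the dominating sequence
  have hg : Tendsto (fun N : ℕ => 2 * c * (N : ℝ) ^ (-s) + 3 / (N : ℝ)) atTop (𝓝 0) := by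
    have h1 : Tendsto (fun N : ℕ => (N : ℝ) ^ (-s)) atTop (𝓝 0) :=
      (tendsto_rpow_neg_atTop hs0).comp tendsto_natCast_atTop_atTop
    have h2 := tendsto_const_div_atTop_nhds_zero_nat (3:ℝ)
    have := (h1.const_mul (2 * c)).add h2
    simpa using this
  apply squeeze_zero' (Eventually.of_forall (fun N => by positivity))
    ?_ hg
  filter_upwards [eventually_ge_atTop 1] with N hN1
  have hN0 : (0:ℝ) < (N:ℝ) := by exact_mod_cast Nat.lt_of_lt_of_le Nat.zero_lt_one hN1
  set K : ℕ := ⌈c * (N : ℝ) ^ (1 - s)⌉₊ with hKdef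
  have hcount : starCountZ a L N ≤ N * (2 * K + 1) := by
    apply count_bound
    intro i j hi hj habs
    rw [Finset.mem_Icc] at hi hj
    constructor
    · rcases le_total i j with hij | hij
      · have := key_est r hr L hL a ha hi.1 hij hj.2 habs
        have hle : (j:ℝ) - i ≤ (K:ℝ) := le_trans this (Nat.le_ceil _)
        have : (j:ℝ) ≤ (i:ℝ) + K := by linarith
        exact_mod_cast this
      · omega
    · rcases le_total j i with hij | hij
      · have habs' : |(a j : ℝ) - (a i : ℝ)| ≤ L := by rwa [abs_sub_comm]
        have := key_est r hr L hL a ha hj.1 hij hi.2 habs'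
        have hle : (i:ℝ) - j ≤ (K:ℝ) := le_trans this (Nat.le_ceil _)
        have : (i:ℝ) ≤ (j:ℝ) + K := by linarith
        exact_mod_cast this
      · omega
  have hKle : (K : ℝ) ≤ c * (N : ℝ) ^ (1 - s) + 1 :=
    le_of_lt (Nat.ceil_lt_add_one (by positivity))
  have h3 : (N:ℝ) ^ (1 - s) = (N:ℝ) ^ (-s) * N := by
    rw [show (1 : ℝ) - s = -s + 1 by ring, Real.rpow_add hN0, Real.rpow_one]
  calc (starCountZ a L N : ℝ) / (N : ℝ) ^ 2
      ≤ ((N : ℝ) * (2 * K + 1)) / (N : ℝ) ^ 2 := by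
        apply div_le_div_of_nonneg_right ?_ (by positivity)
        · exact_mod_cast hcount
    _ = (2 * (K:ℝ) + 1) / N := by
        rw [pow_two, mul_div_mul_left _ _ (ne_of_gt hN0)]
    _ ≤ (2 * (c * (N : ℝ) ^ (1 - s) + 1) + 1) / N := by gcongr
    _ = 2 * c * (N : ℝ) ^ (-s) + 3 / (N : ℝ) := by
        rw [h3]; field_simp; ring
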